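/- arXiv:math/0503697 — 2 statements merged into one kernel-verified Lean document; each statement's English description precedes it below -/
import Mathlib

section
/- Let S be a commutative domain with fraction field Q, let M ⊆ S^n be an S-submodule, and let f : S^n × S^n → S be an S-bilinear form with Q-bilinear extension f_Q on Q^n. Assume: (1) M spans Q^n over Q; (2) there exist elements B_1, …, B_n and C_1, …, C_n of M forming Q-bases of Q^n with f(B_i, C_j) = δ_{ij}; (3) β_1, …, β_p generate M as an S-module. Then for α ∈ S^n, one has α ∈ M if and only if f_Q(α, β_i) ∈ S for all i = 1, …, p. -/
open scoped TensorProduct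

/-- Membership in a lattice detected by a perfect-pairing-type criterion:
`α ∈ M` iff the pairing of `α` with each generator of `M` lands in `S`. -/
theorem mem_lattice_iff_pairing_integral
    (S : Type*) [CommRing S] [IsDomain S]
    (Q : Type*) [Field Q] [Algebra S Q] [IsFractionRing S Q]
    (n p : ℕ)
    (M : Submodule S (Fin n → S))
    (f : (Fin n → S) →ₗ[S] (Fin n → S) →ₗ[S] S)
    (fQ : (Fin n → Q) →ₗ[Q] (Fin n → Q) →ₗ[Q] Q)
    (hcompat : ∀ v w : Fin n → S,
      fQ (fun t => algebraMap S Q (v t)) (fun t => algebraMap S Q (w t)) =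
        algebraMap S Q (f v w))
    -- (1) M spans Q^n over Q
    (hspan : Submodule.span Q
      {x : Fin n → Q | ∃ v ∈ M, x = fun t => algebraMap S Q (v t)} = ⊤)
    -- (2) dual bases B, C inside M
    (B C : Fin n → (Fin n → S))
    (hBM : ∀ i, B i ∈ M) (hCM : ∀ i, C i ∈ M)
    (hBbasis : LinearIndependent Q (fun i => fun t => algebraMap S Q (B i t)) ∧
      Submodule.span Q (Set.range (fun i => fun t => algebraMap S Q (B i t))) = ⊤)
    (hCbasis : LinearIndependent Q (fun i => fun t => algebraMap S Q (C i t)) ∧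
      Submodule.span Q (Set.range (fun i => fun t => algebraMap S Q (C i t))) = ⊤)
    (hdual : ∀ i j, f (B i) (C j) = if i = j then (1 : S) else 0)
    -- (3) generators of M
    (β : Fin p → (Fin n → S))
    (hgen : M = Submodule.span S (Set.range β))
    (α : Fin n → S) :
    α ∈ M ↔ ∀ i : Fin p, ∃ s : S,
      fQ (fun t => algebraMap S Q (α t)) (fun t => algebraMap S Q (β i t)) =
        algebraMap S Q s := by

  have halg : Function.Injective (algebraMap S Q) := IsFractionRing.injective S Q
  set φ : (Fin n → S) →ₗ[S] (Fin n → Q) :=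
    LinearMap.pi (fun t => (Algebra.linearMap S Q).comp (LinearMap.proj t)) with hφ
  have hφapp : ∀ v : Fin n → S, φ v = fun t => algebraMap S Q (v t) := fun v => rfl
  constructor
  · intro hα i
    exact ⟨f α (β i), hcompat α (β i)⟩
  · intro h
    let b : Module.Basis (Fin n) Q (Fin n → Q) := Module.Basis.mk hBbasis.1 hBbasis.2.ge
    have hb : ∀ i, b i = fun t => algebraMap S Q (B i t) := fun i => by simp [b, Module.Basis.mk_apply]
    set αQ : Fin n → Q := fun t => algebraMap S Q (α t) with hαQ
    have hpair : ∀ j, fQ αQ (fun t => algebraMap S Q (C j t)) = b.repr αQ j := by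
      intro j
      have h1 : fQ αQ (fun t => algebraMap S Q (C j t))
          = ∑ i, b.repr αQ i * algebraMap S Q (f (B i) (C j)) := by
        conv_lhs => rw [← b.sum_repr αQ]
        rw [map_sum, LinearMap.sum_apply]
        refine Finset.sum_congr rfl fun i _ => ?_
        rw [map_smul, LinearMap.smul_apply, smul_eq_mul, hb, hcompat]
      rw [h1]
      simp [hdual, apply_ite (algebraMap S Q)]
    have hint : ∀ j, ∃ s : S, b.repr αQ j = algebraMap S Q s := by
      intro j
      have hC : (C j) ∈ Submodule.span S (Set.range β) := hgen ▸ hCM j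
      let N : Submodule S (Fin n → S) :=
        Submodule.comap (((fQ αQ).restrictScalars S).comp φ)
          (LinearMap.range (Algebra.linearMap S Q))
      have hβN : Set.range β ⊆ N := by
        rintro _ ⟨i, rfl⟩
        obtain ⟨s, hs⟩ := h i
        exact ⟨s, hs.symm⟩
      obtain ⟨s, hs⟩ := Submodule.span_le.mpr hβN hC
      exact ⟨s, by rw [← hpair j]; exact hs.symm⟩
    choose s hs using hint
    have hkey : αQ = φ (∑ j, s j • B j) := by
      rw [map_sum]
      conv_lhs => rw [← b.sum_repr αQ]
      refine Finset.sum_congr rfl fun j _ => ?_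
      rw [hs, hb, map_smul, hφapp, algebraMap_smul]
    have hinj : Function.Injective φ := fun v w hvw => funext fun t => halg (congrFun hvw t)
    have hα : α = ∑ j, s j • B j := hinj hkey
    rw [hα]
    exact Submodule.sum_mem _ fun j _ => Submodule.smul_mem _ _ (hBM j)
end

section
/- With the notation of the previous statement, suppose moreover that k[x,y]/I is finite dimensional over k. Then P_l = 1 for all sufficiently large l, and the sequence D_l = deg(P_l), l = 0, 1, 2, …, is a partition (weakly decreasing, eventually zero) whose sum Σ_l D_l equals dim_k k[x,y]/I. -/
open Polynomial

/-- `π` is a partition of `n`: weakly decreasing, eventually zero, with sum `n`. -/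
def IsPartitionOf (n : ℕ) (π : ℕ → ℕ) : Prop :=
  (∀ a, π (a + 1) ≤ π a) ∧
    ∃ N, (∀ a, N ≤ a → π a = 0) ∧ ∑ a ∈ Finset.range N, π a = n

/-- We model `k[x,y]` as `Polynomial (Polynomial k)`, `y` being the outer
variable.  If `I` is homogeneous for the `y`-grading, `J_l = (P_l)` with `P_l`
monic, and `k[x,y]/I` is finite dimensional, then `P_l = 1` for `l` large and
the degrees `D_l = deg P_l` form a partition of `dim_k k[x,y]/I`. -/
theorem degrees_form_partition
    (k : Type*) [Field k]
    (I : Ideal (Polynomial (Polynomial k)))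
    (hhom : ∀ f ∈ I, ∀ l : ℕ, (C (f.coeff l)) * X ^ l ∈ I)
    (P : ℕ → Polynomial k)
    (hmonic : ∀ l, (P l).Monic)
    (hgen : ∀ l : ℕ, ∀ Q : Polynomial k,
      Q ∈ Ideal.span ({P l} : Set (Polynomial k)) ↔ C Q * X ^ l ∈ I)
    (hfin : FiniteDimensional k (Polynomial (Polynomial k) ⧸ I)) :
    (∃ N, ∀ l, N ≤ l → P l = 1) ∧
      IsPartitionOf (Module.finrank k (Polynomial (Polynomial k) ⧸ I))
        (fun l => (P l).natDegree) := by
  classical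
  -- divisibility chain
  have hchain : ∀ l, P (l + 1) ∣ P l := by
    intro l
    rw [← Ideal.mem_span_singleton, hgen]
    have h1 : C (P l) * X ^ l ∈ I := (hgen l (P l)).1 (Ideal.mem_span_singleton_self _)
    have h2 := I.mul_mem_left X h1
    have : C (P l) * X ^ (l + 1) = X * (C (P l) * X ^ l) := by ring
    rwa [this]
  have hdvd : ∀ l m, l ≤ m → P m ∣ P l := by
    intro l m h
    induction m, h using Nat.le_induction with
    | base => exact dvd_rfl
    | succ n hn ih => exact (hchain n).trans ih
  have hmono : ∀ a, (P (a + 1)).natDegree ≤ (P a).natDegree := fun a =>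
    Polynomial.natDegree_le_of_dvd (hchain a) (hmonic a).ne_zero
  -- existence of d with P d = 1
  haveI : Module.Finite k (Polynomial (Polynomial k) ⧸ I) := hfin
  have haev : ∀ q : Polynomial k, aeval (X : Polynomial (Polynomial k)) q = q.map (C : k →+* Polynomial k) := by
    intro q
    induction q using Polynomial.induction_on' with
    | add a b ha hb => simp [ha, hb]
    | monomial n a => simp [Polynomial.map_monomial, C_mul_X_pow_eq_monomial, algebraMap_eq]
  obtain ⟨p, hpm, hp0⟩ := IsIntegral.of_finite k (Ideal.Quotient.mk I (X : Polynomial (Polynomial k)))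
  have hmk : Ideal.Quotient.mk I (aeval (X : Polynomial (Polynomial k)) p) = 0 := by
    have hcomp : (Ideal.Quotient.mk I).comp (algebraMap k (Polynomial (Polynomial k)))
        = algebraMap k (Polynomial (Polynomial k) ⧸ I) := by
      rw [← Ideal.Quotient.algebraMap_eq, ← IsScalarTower.algebraMap_eq]
    rw [aeval_def, Polynomial.hom_eval₂, hcomp]
    exact hp0
  have hmem : p.map (C : k →+* Polynomial k) ∈ I := by
    rw [← haev p]
    exact (Ideal.Quotient.eq_zero_iff_mem).mp hmk
  set d := p.natDegree with hd
  have hPd : P d = 1 := by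
    have h1 : C ((p.map (C : k →+* Polynomial k)).coeff d) * X ^ d ∈ I := hhom _ hmem d
    have hc : (p.map (C : k →+* Polynomial k)).coeff d = C (p.coeff d) := coeff_map _ _
    rw [hc, hpm.coeff_natDegree, map_one] at h1
    have : (1 : Polynomial k) ∈ Ideal.span ({P d} : Set (Polynomial k)) := (hgen d 1).2 h1
    exact (hmonic d).eq_one_of_isUnit (isUnit_of_dvd_one (Ideal.mem_span_singleton.mp this))
  have hone : ∀ l, d ≤ l → P l = 1 := fun l hl =>
    (hmonic l).eq_one_of_isUnit (isUnit_of_dvd_one (hPd ▸ hdvd d l hl))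
  refine ⟨⟨d, hone⟩, ?_, d, fun a ha => by simp [hone a ha], ?_⟩
  · exact hmono
  -- the dimension count
  -- component maps
  let T : Fin d → Type _ := fun l => AdjoinRoot (P l)
  let φc : ∀ l : Fin d, Polynomial (Polynomial k) →ₗ[k] T l := fun l =>
    { toFun := fun f => AdjoinRoot.mk (P l) (f.coeff l)
      map_add' := by intro a b; simp only [Polynomial.coeff_add, map_add]
      map_smul' := by
        intro a f
        simp only [RingHom.id_apply, Algebra.smul_def, Polynomial.algebraMap_apply,
          Polynomial.coeff_C_mul, map_mul, AdjoinRoot.algebraMap_eq]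
        rfl }
  let φ : Polynomial (Polynomial k) →ₗ[k] (∀ l : Fin d, T l) := LinearMap.pi φc
  have hker : ∀ f : Polynomial (Polynomial k), φ f = 0 ↔ f ∈ I := by
    intro f
    constructor
    · intro h
      have hall : ∀ l : ℕ, C (f.coeff l) * X ^ l ∈ I := by
        intro l
        by_cases hl : l < d
        · have := congrFun h ⟨l, hl⟩
          simp only [φ, φc, LinearMap.pi_apply, LinearMap.coe_mk, AddHom.coe_mk,
            Pi.zero_apply] at this
          have : P l ∣ f.coeff l := AdjoinRoot.mk_eq_zero.mp this
          exact (hgen l _).1 (Ideal.mem_span_singleton.mpr this)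
        · have : P l = 1 := hone l (le_of_not_gt hl)
          exact (hgen l _).1 (Ideal.mem_span_singleton.mpr (this ▸ one_dvd _))
      have : f = ∑ i ∈ Finset.range (f.natDegree + 1), C (f.coeff i) * X ^ i :=
        f.as_sum_range_C_mul_X_pow
      rw [this]
      exact Ideal.sum_mem I fun i _ => hall i
    · intro hf
      funext l
      have := hhom f hf l
      have hPdvd : P l ∣ f.coeff l := Ideal.mem_span_singleton.mp ((hgen l _).2 this)
      simp only [φ, φc, LinearMap.pi_apply, LinearMap.coe_mk, AddHom.coe_mk, Pi.zero_apply]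
      exact AdjoinRoot.mk_eq_zero.mpr hPdvd
  have hle : I.restrictScalars k ≤ LinearMap.ker φ := fun f hf => (hker f).mpr hf
  let φ' : (Polynomial (Polynomial k) ⧸ I.restrictScalars k) →ₗ[k] (∀ l : Fin d, T l) :=
    Submodule.liftQ _ φ hle
  have hinj : Function.Injective φ' := by
    rw [← LinearMap.ker_eq_bot]
    exact Submodule.ker_liftQ_eq_bot _ _ _ (fun f hf => (hker f).mp hf)
  have hsurj : Function.Surjective φ' := by
    intro v
    choose Q hQ using fun l : Fin d => AdjoinRoot.mk_surjective (v l)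
    refine ⟨Submodule.Quotient.mk (∑ l : Fin d, C (Q l) * X ^ (l : ℕ)), ?_⟩
    funext l
    have : φ' (Submodule.Quotient.mk (∑ j : Fin d, C (Q j) * X ^ (j : ℕ))) l
        = AdjoinRoot.mk (P l) ((∑ j : Fin d, C (Q j) * X ^ (j : ℕ)).coeff l) := rfl
    rw [this]
    have hcoeff : (∑ j : Fin d, C (Q j) * X ^ (j : ℕ)).coeff l = Q l := by
      rw [finset_sum_coeff]
      rw [Finset.sum_eq_single l]
      · simp
      · intro j _ hj
        have hne : (j : ℕ) ≠ (l : ℕ) := fun h => hj (Fin.ext h)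
        simp [coeff_C_mul, coeff_X_pow, hne, Ne.symm hne]
      · simp
    rw [hcoeff, hQ l]
  let e : (Polynomial (Polynomial k) ⧸ I.restrictScalars k) ≃ₗ[k] (∀ l : Fin d, T l) :=
    LinearEquiv.ofBijective φ' ⟨hinj, hsurj⟩
  let e0 : (Polynomial (Polynomial k) ⧸ I.restrictScalars k) ≃ₗ[k] (Polynomial (Polynomial k) ⧸ I) :=
    Submodule.Quotient.restrictScalarsEquiv k I
  haveI : ∀ l : Fin d, Module.Finite k (T l) := fun l =>
    Module.Finite.of_basis (AdjoinRoot.powerBasis' (hmonic l)).basis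
  haveI : ∀ l : Fin d, Module.Free k (T l) := fun l =>
    Module.Free.of_basis (AdjoinRoot.powerBasis' (hmonic l)).basis
  have hfr : Module.finrank k (Polynomial (Polynomial k) ⧸ I) = ∑ l : Fin d, (P l).natDegree := by
    rw [← e0.finrank_eq, e.finrank_eq, Module.finrank_pi_fintype]
    congr 1
    funext l
    exact (AdjoinRoot.powerBasis' (hmonic l)).finrank
  rw [hfr]
  exact (Fin.sum_univ_eq_sum_range (fun l => (P l).natDegree) d).symm
end
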